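/- Let G be a group and let φ : G → ℤ be a surjective group homomorphism with kernel K. Suppose that the ℚ-vector space ℚ ⊗_ℤ Ab(K) is finite-dimensional, of dimension d. Then for every integer m ≥ 1, the subgroup H_m := φ⁻¹(mℤ) of G satisfies: ℚ ⊗_ℤ Ab(H_m) is finite-dimensional of dimension at most d + 1. (This is the group-theoretic core of Lemma 3.3: if the Alexander polynomial Δ^ψ_X(t) of a connected finite cell complex X with respect to a primitive class ψ does not vanish, then every finite cyclic cover X'_m of X dual to ψ satisfies b₁(X'_m) ≤ deg(Δ^ψ_X) + 1.) -/
import Mathlib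


open TensorProduct

/-- Group-theoretic core of Lemma 3.3: if `ℚ ⊗ Ab(ker φ)` is finite-dimensional of
dimension `d`, then for every `m ≥ 1` the preimage subgroup `φ⁻¹(mℤ)` has
`ℚ ⊗ Ab` of dimension at most `d + 1`. -/
theorem stmt_0 (G : Type*) [Group G] (φ : G →* Multiplicative ℤ)
    (hφ : Function.Surjective φ) (d : ℕ)
    (hfin : FiniteDimensional ℚ (ℚ ⊗[ℤ] Additive (Abelianization φ.ker)))
    (hd : Module.finrank ℚ (ℚ ⊗[ℤ] Additive (Abelianization φ.ker)) = d)
    (m : ℤ) (hm : 1 ≤ m) :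
    FiniteDimensional ℚ (ℚ ⊗[ℤ] Additive (Abelianization
      (Subgroup.comap φ (AddSubgroup.toSubgroup (AddSubgroup.zmultiples m))))) ∧
    Module.finrank ℚ (ℚ ⊗[ℤ] Additive (Abelianization
      (Subgroup.comap φ (AddSubgroup.toSubgroup (AddSubgroup.zmultiples m))))) ≤ d + 1 := by
  set H := Subgroup.comap φ (AddSubgroup.toSubgroup (AddSubgroup.zmultiples m)) with hH
  have hKH : φ.ker ≤ H := by
    intro k hk
    have : φ k = 1 := hk
    simp only [hH, Subgroup.mem_comap, this]
    exact one_mem _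
  obtain ⟨g₀, hg₀⟩ := hφ (Multiplicative.ofAdd m)
  have hg₀H : g₀ ∈ H := by
    simp only [hH, Subgroup.mem_comap, hg₀]
    exact AddSubgroup.mem_zmultiples m
  set h₀ : H := ⟨g₀, hg₀H⟩ with hh₀
  set f₁ : Abelianization φ.ker →* Abelianization H :=
    Abelianization.map (Subgroup.inclusion hKH) with hf₁
  set f₂ : Multiplicative ℤ →* Abelianization H :=
    zpowersHom _ (Abelianization.of h₀) with hf₂
  have hgen : ∀ x : Abelianization H, ∃ (a : Abelianization φ.ker) (b : Multiplicative ℤ),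
      f₁ a * f₂ b = x := by
    intro x
    induction x using QuotientGroup.induction_on with
    | _ h =>
      obtain ⟨n, hn⟩ := (AddSubgroup.mem_zmultiples_iff).mp h.2
      have hφh : φ (h : G) = Multiplicative.ofAdd m ^ n := by
        rw [← ofAdd_zsmul, hn, ofAdd_toAdd]
      have hk : (h : G) * (g₀ ^ n)⁻¹ ∈ φ.ker := by
        rw [MonoidHom.mem_ker, map_mul, map_inv, map_zpow, hg₀, hφh, mul_inv_cancel]
      have hval : (Subgroup.inclusion hKH ⟨_, hk⟩ : ↥H) * h₀ ^ n = h := by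
        apply Subtype.ext
        simp only [Subgroup.coe_mul, Subgroup.coe_inclusion, SubgroupClass.coe_zpow, hh₀]
        group
      refine ⟨Abelianization.of ⟨_, hk⟩, Multiplicative.ofAdd n, ?_⟩
      have h1 : f₁ (Abelianization.of ⟨_, hk⟩) =
          Abelianization.of (Subgroup.inclusion hKH ⟨_, hk⟩) := rfl
      have h2 : f₂ (Multiplicative.ofAdd n) = (Abelianization.of h₀) ^ n := rfl
      rw [h1, h2, ← map_zpow, ← map_mul, hval]
      rfl
  -- pass to additive linear maps and base change
  let l₁ : Additive (Abelianization φ.ker) →ₗ[ℤ] Additive (Abelianization H) :=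
    (MonoidHom.toAdditive f₁).toIntLinearMap
  let l₂ : Additive (Multiplicative ℤ) →ₗ[ℤ] Additive (Abelianization H) :=
    (MonoidHom.toAdditive f₂).toIntLinearMap
  let L : (ℚ ⊗[ℤ] Additive (Abelianization φ.ker)) × (ℚ ⊗[ℤ] Additive (Multiplicative ℤ))
      →ₗ[ℚ] ℚ ⊗[ℤ] Additive (Abelianization H) :=
    (l₁.baseChange ℚ).coprod (l₂.baseChange ℚ)
  have hL : Function.Surjective L := by
    intro x
    induction x using TensorProduct.induction_on with
    | zero => exact ⟨0, map_zero L⟩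
    | tmul q y =>
      obtain ⟨a, b, hab⟩ := hgen y.toMul
      refine ⟨(q ⊗ₜ Additive.ofMul a, q ⊗ₜ Additive.ofMul b), ?_⟩
      have h3 : l₁ (Additive.ofMul a) + l₂ (Additive.ofMul b) = y := by
        show Additive.ofMul (f₁ a * f₂ b) = y
        rw [hab, ofMul_toMul]
      have h4 : L (q ⊗ₜ Additive.ofMul a, q ⊗ₜ Additive.ofMul b)
          = q ⊗ₜ (l₁ (Additive.ofMul a) + l₂ (Additive.ofMul b)) := by
        simp [L, LinearMap.coprod_apply, LinearMap.baseChange_tmul, tmul_add]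
      rw [h4, h3]
    | add x y hx hy =>
      obtain ⟨u, hu⟩ := hx
      obtain ⟨v, hv⟩ := hy
      exact ⟨u + v, by rw [map_add, hu, hv]⟩
  -- the second factor is one-dimensional
  let e : (ℚ ⊗[ℤ] Additive (Multiplicative ℤ)) ≃ₗ[ℚ] ℚ :=
    (TensorProduct.AlgebraTensorModule.congr (LinearEquiv.refl ℚ ℚ)
      (AddEquiv.additiveMultiplicative ℤ).toIntLinearEquiv).trans
      (TensorProduct.AlgebraTensorModule.rid ℤ ℚ ℚ)
  have hfin2 : FiniteDimensional ℚ (ℚ ⊗[ℤ] Additive (Multiplicative ℤ)) :=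
    Module.Finite.equiv e.symm
  have hrk2 : Module.finrank ℚ (ℚ ⊗[ℤ] Additive (Multiplicative ℤ)) = 1 := by
    rw [e.finrank_eq, Module.finrank_self]
  have hfinD : FiniteDimensional ℚ ((ℚ ⊗[ℤ] Additive (Abelianization φ.ker)) ×
      (ℚ ⊗[ℤ] Additive (Multiplicative ℤ))) := by infer_instance
  have hrkD : Module.finrank ℚ ((ℚ ⊗[ℤ] Additive (Abelianization φ.ker)) ×
      (ℚ ⊗[ℤ] Additive (Multiplicative ℤ))) = d + 1 := by
    rw [Module.finrank_prod, hd, hrk2]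
  have hT : FiniteDimensional ℚ (ℚ ⊗[ℤ] Additive (Abelianization H)) :=
    Module.Finite.of_surjective L hL
  refine ⟨hT, ?_⟩
  have hle := L.rank_le_of_surjective hL
  have h2 : Module.rank ℚ ((ℚ ⊗[ℤ] Additive (Abelianization φ.ker)) ×
      (ℚ ⊗[ℤ] Additive (Multiplicative ℤ))) = ((d + 1 : ℕ) : Cardinal) := by
    rw [← hrkD]
    exact (Module.finrank_eq_rank ℚ _).symm
  exact Module.finrank_le_of_rank_le (hle.trans h2.le)
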